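/- Let K be an infinite field and let M, N be positive integers. Then there exists an M×N matrix A with entries in T that is strongly badly approximable. -/

import Mathlib

open scoped BigOperators Classical

noncomputable section

variable {K : Type*} [Field K]

/-- `x` as an element of `L = K((x⁻¹))`, realized as the Laurent series in `t = x⁻¹`
supported at the single exponent `-1`. -/
def xL (K : Type*) [Field K] : LaurentSeries K := HahnSeries.single (-1 : ℤ) 1

/-- The embedding of the polynomial ring `K[x]` into `L = K((x⁻¹))`. -/
def toL (P : Polynomial K) : LaurentSeries K := Polynomial.aeval (xL K) P

/-- The absolute value on `L`: `|0| = 0` and `|F| = e^M` where `M` is the degree in `x`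
of the leading term of `F` (i.e. `M = -(order of F as a series in t = x⁻¹)`). -/
def absL (F : LaurentSeries K) : ℝ := if F = 0 then 0 else Real.exp (-(F.order : ℝ))

/-- `‖F‖`, the distance from `F` to the nearest polynomial in `x`. -/
def normL (F : LaurentSeries K) : ℝ :=
  sInf { r : ℝ | ∃ P : Polynomial K, r = absL (F - toL P) }

/-- The solution space `V(U₁,…,U_N; V₁,…,V_M)` of the system
`|ξ_n| < e^{U_n}` and `‖∑_n α_{mn} ξ_n‖ < e^{-V_m}`. -/
def VSet {M N : ℕ} (A : Matrix (Fin M) (Fin N) (LaurentSeries K))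
    (U : Fin N → ℕ) (V : Fin M → ℕ) : Set (Fin N → Polynomial K) :=
  { ξ | (∀ n, absL (toL (ξ n)) < Real.exp (U n)) ∧
        (∀ m, normL (∑ n, A m n * toL (ξ n)) < Real.exp (-(V m : ℝ))) }

/-- `dim V(U₁,…,U_N; V₁,…,V_M)` as a `K`-vector space. -/
def dimV {M N : ℕ} (A : Matrix (Fin M) (Fin N) (LaurentSeries K))
    (U : Fin N → ℕ) (V : Fin M → ℕ) : ℕ :=
  Module.finrank K (Submodule.span K (VSet A U V))

/-- An `M × N` matrix with entries in `T = L/K[x]` is strongly badly approximable if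
there is `C₁ > 0` with `e^{-C₁} < (∏_m ‖∑_n α_{mn} ξ_n‖) (∏_n max(|ξ_n|,1))`
for all nonzero `ξ ∈ K[x]^N`. -/
def StronglyBadlyApproximable {M N : ℕ}
    (A : Matrix (Fin M) (Fin N) (LaurentSeries K)) : Prop :=
  ∃ C₁ : ℝ, 0 < C₁ ∧ ∀ ξ : Fin N → Polynomial K, ξ ≠ 0 →
    Real.exp (-C₁) <
      (∏ m, normL (∑ n, A m n * toL (ξ n))) * (∏ n, max (absL (toL (ξ n))) 1)

/-- The `V × U` Hankel matrix `M_{U;V}(α)` with `(i,j)` entry `a_{i+j-1}` (1-indexed),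
where `a_i` is the coefficient of `x^{-i}` in `α`. -/
def hankel (α : LaurentSeries K) (U V : ℕ) : Matrix (Fin V) (Fin U) K :=
  Matrix.of fun i j => α.coeff ((i : ℤ) + (j : ℤ) + 1)

/-- The block matrix `M_{U₁,…,U_N; V₁,…,V_M}(A)` whose `(m,n)` block is
`M_{U_n; V_m}(α_{mn})`. -/
def blockM {M N : ℕ} (A : Matrix (Fin M) (Fin N) (LaurentSeries K))
    (U : Fin N → ℕ) (V : Fin M → ℕ) :
    Matrix ((m : Fin M) × Fin (V m)) ((n : Fin N) × Fin (U n)) K :=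
  Matrix.of fun i j => hankel (A i.1 j.1) (U j.1) (V i.1) i.2 j.2

namespace SBAaux

variable {R : Type*} [CommRing R]

theorem update_le {P : ℕ} (W : Fin P → ℕ) (p : Fin P) (v : ℕ) (hv : v ≤ W p) (q : Fin P) :
    Function.update W p v q ≤ W q := by
  rcases eq_or_ne q p with rfl | h
  · rw [Function.update_self]; exact hv
  · rw [Function.update_of_ne h]

def RegM {ι κ : Type*} (B : Matrix ι κ R) : Prop :=
  ∀ (d : ℕ) (e : Fin d ≃ ι) (f : Fin d ≃ κ), (B.submatrix e f).det ≠ 0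

theorem det_transfer {ι κ ρ ρ' : Type*} [Fintype ρ] [DecidableEq ρ] [Fintype ρ'] [DecidableEq ρ']
    (B : Matrix ι κ R) (e : ρ ≃ ι) (f : ρ ≃ κ) (e' : ρ' ≃ ι) (f' : ρ' ≃ κ)
    (h : (B.submatrix e f).det ≠ 0) : (B.submatrix e' f').det ≠ 0 := by
  have key : B.submatrix e' f' =
      ((B.submatrix e f).submatrix (e'.trans e.symm) (e'.trans e.symm)).submatrix
        (Equiv.refl ρ') ((f'.trans f.symm).trans (e'.trans e.symm).symm) := by
    ext i j
    simp [Matrix.submatrix_apply]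
  rw [key]
  have h2 : (((B.submatrix e f).submatrix (e'.trans e.symm) (e'.trans e.symm))).det ≠ 0 := by
    rwa [Matrix.det_submatrix_equiv_self]
  set C := (B.submatrix e f).submatrix (e'.trans e.symm) (e'.trans e.symm)
  set σ : Equiv.Perm ρ' := (f'.trans f.symm).trans (e'.trans e.symm).symm
  have : C.submatrix (Equiv.refl ρ') σ = C.submatrix id σ := rfl
  rw [this, Matrix.det_permute']
  rcases Int.units_eq_one_or (Equiv.Perm.sign σ) with hs | hs <;> simp [hs, h2]

theorem regM_of_det {ι κ ρ : Type*} [Fintype ρ] [DecidableEq ρ]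
    (B : Matrix ι κ R) (e : ρ ≃ ι) (f : ρ ≃ κ)
    (h : (B.submatrix e f).det ≠ 0) : RegM B :=
  fun _ e' f' => det_transfer B e f e' f' h

theorem regM_of_isEmpty {ι κ : Type*} [IsEmpty ι] [Nontrivial R] (B : Matrix ι κ R) : RegM B := by
  intro d e f
  haveI : IsEmpty (Fin d) := Function.isEmpty e
  rw [Matrix.det_isEmpty]
  exact one_ne_zero

def sigEquiv {P : ℕ} (W : Fin P → ℕ) (p : Fin P) (hp : 0 < W p) :
    ((q : Fin P) × Fin (Function.update W p (W p - 1) q)) ⊕ Unit ≃ ((q : Fin P) × Fin (W q)) :=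
  Equiv.ofBijective
    (Sum.elim
      (fun x => ⟨x.1, ⟨(x.2 : ℕ),
        lt_of_lt_of_le x.2.2 (update_le W p (W p - 1) (by omega) x.1)⟩⟩)
      (fun _ => ⟨p, ⟨W p - 1, by omega⟩⟩))
    (by
      constructor
      · rintro (⟨a, iv, hiv⟩ | ⟨⟩) (⟨b, jv, hjv⟩ | ⟨⟩) h
        · simp only [Sum.elim_inl] at h
          obtain ⟨h1, h2⟩ := Sigma.mk.inj_iff.mp h
          subst h1
          have h3 : iv = jv := congrArg Fin.val (eq_of_heq h2)
          subst h3
          rfl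
        · exfalso
          simp only [Sum.elim_inl, Sum.elim_inr] at h
          obtain ⟨h1, h2⟩ := Sigma.mk.inj_iff.mp h
          subst h1
          have h3 : iv = W a - 1 := congrArg Fin.val (eq_of_heq h2)
          rw [Function.update_self] at hiv
          omega
        · exfalso
          simp only [Sum.elim_inl, Sum.elim_inr] at h
          obtain ⟨h1, h2⟩ := Sigma.mk.inj_iff.mp h.symm
          subst h1
          have h3 : jv = W b - 1 := congrArg Fin.val (eq_of_heq h2)
          rw [Function.update_self] at hjv
          omega
        · rfl
      · rintro ⟨a, iv, hiv⟩
        rcases eq_or_ne a p with ha | ha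
        · subst ha
          rcases eq_or_ne iv (W a - 1) with hi | hi
          · exact ⟨Sum.inr (), congrArg (Sigma.mk a) (Fin.ext hi.symm)⟩
          · refine ⟨Sum.inl ⟨a, ⟨iv, ?_⟩⟩, congrArg (Sigma.mk a) (Fin.ext rfl)⟩
            rw [Function.update_self]
            omega
        · exact ⟨Sum.inl ⟨a, ⟨iv, by rw [Function.update_of_ne ha]; exact hiv⟩⟩,
            congrArg (Sigma.mk a) (Fin.ext rfl)⟩)

variable {Mn Nn : ℕ}

def hkM (b : ℕ → Fin Mn → Fin Nn → R) (U : Fin Nn → ℕ) (V : Fin Mn → ℕ) :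
    Matrix ((m : Fin Mn) × Fin (V m)) ((n : Fin Nn) × Fin (U n)) R :=
  fun i j => b ((i.2 : ℕ) + (j.2 : ℕ) + 1) i.1 j.1

def BoundedUV (U : Fin Nn → ℕ) (V : Fin Mn → ℕ) (k : ℕ) : Prop :=
  ∀ m n, 0 < V m → 0 < U n → V m + U n ≤ k + 1

theorem card_sigma_fin {P : ℕ} (W : Fin P → ℕ) :
    Fintype.card ((q : Fin P) × Fin (W q)) = ∑ q, W q := by
  simp [Fintype.card_sigma]

theorem exists_le_sum {P : ℕ} (f : Fin P → ℕ) (t : ℕ) (h : t ≤ ∑ i, f i) :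
    ∃ g : Fin P → ℕ, (∀ i, g i ≤ f i) ∧ ∑ i, g i = t := by
  induction t with
  | zero => exact ⟨0, fun i => Nat.zero_le _, by simp⟩
  | succ t ih =>
    obtain ⟨g, hg, hsum⟩ := ih (le_trans (Nat.le_succ t) h)
    have hlt : ∃ i, g i < f i := by
      by_contra hc
      push_neg at hc
      have : ∑ i, f i ≤ ∑ i, g i := Finset.sum_le_sum fun i _ => hc i
      omega
    obtain ⟨i, hi⟩ := hlt
    refine ⟨Function.update g i (g i + 1), fun j => ?_, ?_⟩
    · rcases eq_or_ne j i with rfl | hj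
      · rw [Function.update_self]; omega
      · rw [Function.update_of_ne hj]; exact hg j
    · rw [Finset.sum_update_of_mem (Finset.mem_univ i), Finset.sdiff_singleton_eq_erase]
      have h2 : g i + ∑ x ∈ Finset.univ.erase i, g x = ∑ x, g x :=
        Finset.add_sum_erase _ g (Finset.mem_univ i)
      omega

theorem sum_update_sub_one {P : ℕ} (W : Fin P → ℕ) (p : Fin P) (hp : 0 < W p) :
    (∑ q, Function.update W p (W p - 1) q) = (∑ q, W q) - 1 := by
  rw [Finset.sum_update_of_mem (Finset.mem_univ p), Finset.sdiff_singleton_eq_erase]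
  have h2 : W p + ∑ x ∈ Finset.univ.erase p, W x = ∑ x, W x :=
    Finset.add_sum_erase _ W (Finset.mem_univ p)
  omega

variable {K : Type*} [Field K]

def liftA (a : ℕ → Fin Mn → Fin Nn → K) (k : ℕ) :
    ℕ → Fin Mn → Fin Nn → MvPolynomial (Fin Mn × Fin Nn) K :=
  fun i m n => if i = k then MvPolynomial.X (m, n) else MvPolynomial.C (a i m n)

def GoodA (a : ℕ → Fin Mn → Fin Nn → K) (k : ℕ) : Prop :=
  ∀ U V, (∑ n, U n) = (∑ m, V m) → BoundedUV U V k → RegM (hkM a U V)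

theorem inner_reg (a : ℕ → Fin Mn → Fin Nn → K) (k : ℕ) (hold : GoodA a k) :
    ∀ s (U : Fin Nn → ℕ) (V : Fin Mn → ℕ), (∑ n, U n) = s → (∑ m, V m) = s →
      BoundedUV U V (k + 1) → RegM (hkM (liftA a (k + 1)) U V) := by
  intro s
  induction s using Nat.strong_induction_on with
  | _ s IH =>
  intro U V hU hV hB
  by_cases hsmall : BoundedUV U V k
  · -- no new variables appear: reduce to the K-valued determinant
    have hmat : hkM (liftA a (k+1)) U V = (hkM a U V).map (MvPolynomial.C) := by
      funext ⟨mi, ii⟩ ⟨nj, jj⟩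
      show liftA a (k+1) ((ii:ℕ)+(jj:ℕ)+1) mi nj = MvPolynomial.C (a ((ii:ℕ)+(jj:ℕ)+1) mi nj)
      rw [liftA, if_neg]
      have hb := hsmall mi nj (lt_of_le_of_lt (Nat.zero_le _) ii.2) (lt_of_le_of_lt (Nat.zero_le _) jj.2)
      have := ii.2; have := jj.2
      omega
    intro d e f
    have hsub : (hkM (liftA a (k + 1)) U V).submatrix e f
        = ((hkM a U V).submatrix e f).map (MvPolynomial.C) := by
      rw [hmat]; rfl
    rw [hsub, ← RingHom.mapMatrix_apply, ← RingHom.map_det]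
    have hd := hold U V (hU.trans hV.symm) hsmall d e f
    intro hzero
    exact hd (MvPolynomial.C_injective _ _ (by rw [hzero, map_zero]))
  · -- a corner with the fresh variable exists
    unfold BoundedUV at hsmall
    push_neg at hsmall
    obtain ⟨m, n, hVm, hUn, hgt⟩ := hsmall
    have hcorner : V m + U n = k + 2 := le_antisymm (hB m n hVm hUn) (by omega)
    set U' := Function.update U n (U n - 1) with hU'def
    set V' := Function.update V m (V m - 1) with hV'def
    have hsumU' : (∑ n', U' n') = s - 1 := by
      rw [hU'def, sum_update_sub_one U n hUn, hU]
    have hsumV' : (∑ m', V' m') = s - 1 := by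
      rw [hV'def, sum_update_sub_one V m hVm, hV]
    have hs1 : 1 ≤ s := by
      have : V m ≤ ∑ m', V m' := Finset.single_le_sum (fun i _ => Nat.zero_le _) (Finset.mem_univ m)
      omega
    have hB' : BoundedUV U' V' (k+1) := by
      intro m' n' h1 h2
      have hv' : V' m' ≤ V m' := by rw [hV'def]; exact update_le V m (V m - 1) (by omega) m'
      have hu' : U' n' ≤ U n' := by rw [hU'def]; exact update_le U n (U n - 1) (by omega) n'
      have := hB m' n' (lt_of_lt_of_le h1 hv') (lt_of_lt_of_le h2 hu')
      omega
    have hreg' := IH (s-1) (by omega) U' V' hsumU' hsumV' hB'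
    have cardι' : Fintype.card ((m' : Fin Mn) × Fin (V' m')) = s - 1 := by
      rw [card_sigma_fin]; exact hsumV'
    have cardκ' : Fintype.card ((n' : Fin Nn) × Fin (U' n')) = s - 1 := by
      rw [card_sigma_fin]; exact hsumU'
    set e' : Fin (s-1) ≃ ((m' : Fin Mn) × Fin (V' m')) := (Fintype.equivFinOfCardEq cardι').symm with he'
    set f' : Fin (s-1) ≃ ((n' : Fin Nn) × Fin (U' n')) := (Fintype.equivFinOfCardEq cardκ').symm with hf'
    have hdetA : ((hkM (liftA a (k+1)) U' V').submatrix e' f').det ≠ 0 := hreg' (s-1) e' f'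
    set E : (Fin (s-1) ⊕ Unit) ≃ ((m' : Fin Mn) × Fin (V m')) :=
      (Equiv.sumCongr e' (Equiv.refl Unit)).trans (sigEquiv V m hVm) with hE
    set F : (Fin (s-1) ⊕ Unit) ≃ ((n' : Fin Nn) × Fin (U n')) :=
      (Equiv.sumCongr f' (Equiv.refl Unit)).trans (sigEquiv U n hUn) with hF
    set Bρ := (hkM (liftA a (k+1)) U V).submatrix E F with hBρ
    -- bounds in the reduced fibers
    have hVbound : ∀ (y : (m' : Fin Mn) × Fin (V' m')), y.1 = m → (y.2 : ℕ) < V m - 1 := by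
      rintro ⟨a1, iv, hiv⟩ h
      dsimp at h
      subst h
      rwa [hV'def, Function.update_self] at hiv
    have hUbound : ∀ (y : (n' : Fin Nn) × Fin (U' n')), y.1 = n → (y.2 : ℕ) < U n - 1 := by
      rintro ⟨a1, iv, hiv⟩ h
      dsimp at h
      subst h
      rwa [hU'def, Function.update_self] at hiv
    -- the substitution shifting the corner variable
    set g : Fin Mn × Fin Nn → MvPolynomial (Fin Mn × Fin Nn) K :=
      fun p => if p = (m, n) then MvPolynomial.X p + 1 else MvPolynomial.X p with hg
    set σR : MvPolynomial (Fin Mn × Fin Nn) K →+* MvPolynomial (Fin Mn × Fin Nn) K :=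
      (MvPolynomial.aeval g).toRingHom with hσR
    have hfix : ∀ (idx : ℕ) (mm : Fin Mn) (nn : Fin Nn), (idx = k+1 → (mm, nn) ≠ (m, n)) →
        σR (liftA a (k+1) idx mm nn) = liftA a (k+1) idx mm nn := by
      intro idx mm nn hcond
      rw [liftA]
      split_ifs with h
      · have hne := hcond h
        show MvPolynomial.aeval g (MvPolynomial.X (mm, nn)) = _
        rw [MvPolynomial.aeval_X, hg]
        simp [hne]
      · show MvPolynomial.aeval g (MvPolynomial.C _) = _
        rw [MvPolynomial.aeval_C, MvPolynomial.algebraMap_eq]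
    have hcornerval : Bρ (Sum.inr ()) (Sum.inr ()) = MvPolynomial.X (m, n) := by
      show liftA a (k+1) (((V m - 1) : ℕ) + ((U n - 1) : ℕ) + 1) m n = _
      rw [liftA, if_pos (by omega)]
    have hcornerσ : σR (Bρ (Sum.inr ()) (Sum.inr ())) = Bρ (Sum.inr ()) (Sum.inr ()) + 1 := by
      rw [hcornerval]
      show MvPolynomial.aeval g (MvPolynomial.X (m, n)) = _
      rw [MvPolynomial.aeval_X, hg]
      simp
    have hoff : ∀ r c, ¬(r = Sum.inr () ∧ c = Sum.inr ()) → σR (Bρ r c) = Bρ r c := by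
      rintro (i | ⟨⟩) (j | ⟨⟩) hrc
      · show σR (liftA a (k+1) (((e' i).2 : ℕ) + ((f' j).2 : ℕ) + 1) (e' i).1 (f' j).1) = _
        apply hfix
        intro hidx hp
        obtain ⟨hp1, hp2⟩ := Prod.mk.injEq _ _ _ _ ▸ hp
        have h1 := hVbound (e' i) hp1
        have h2 := hUbound (f' j) hp2
        omega
      · show σR (liftA a (k+1) (((e' i).2 : ℕ) + ((U n - 1) : ℕ) + 1) (e' i).1 n) = _
        apply hfix
        intro hidx hp
        obtain ⟨hp1, hp2⟩ := Prod.mk.injEq _ _ _ _ ▸ hp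
        have h1 := hVbound (e' i) hp1
        omega
      · show σR (liftA a (k+1) (((V m - 1) : ℕ) + ((f' j).2 : ℕ) + 1) m (f' j).1) = _
        apply hfix
        intro hidx hp
        obtain ⟨hp1, hp2⟩ := Prod.mk.injEq _ _ _ _ ▸ hp
        have h2 := hUbound (f' j) hp2
        omega
      · exact absurd ⟨rfl, rfl⟩ hrc
    have key1 : ∀ (i j : Fin (s-1)), Bρ (Sum.inl i) (Sum.inl j)
        = (hkM (liftA a (k+1)) U' V').submatrix e' f' i j := fun i j => rfl
    -- determinant expansion in the corner entry
    set jc : Fin (s-1) ⊕ Unit := Sum.inr () with hjc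
    set col : (Fin (s-1) ⊕ Unit) → MvPolynomial (Fin Mn × Fin Nn) K := fun r => Bρ r jc with hcoldef
    set ecol : (Fin (s-1) ⊕ Unit) → MvPolynomial (Fin Mn × Fin Nn) K := Pi.single jc 1 with hecol
    have expand : ∀ t, (Bρ.updateCol jc (Function.update col jc t)).det
        = (Bρ.updateCol jc (Function.update col jc 0)).det
          + t * (Bρ.updateCol jc (Pi.single jc 1)).det := by
      intro t
      have hcol : Function.update col jc t = Function.update col jc 0 + t • ecol := by
        funext r
        rcases eq_or_ne r jc with rfl | hr
        · simp [hecol]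
        · simp [hecol, Function.update_of_ne hr, Pi.single_eq_of_ne hr]
      rw [hcol, Matrix.det_updateCol_add, Matrix.det_updateCol_smul, hecol]
    have hself : Bρ.updateCol jc (Function.update col jc (Bρ jc jc)) = Bρ := by
      have h1 : Function.update col jc (Bρ jc jc) = col := Function.update_eq_self jc col
      rw [h1, hcoldef]
      exact Matrix.updateCol_eq_self Bρ jc
    have hmapσ : Bρ.map σR = Bρ.updateCol jc (Function.update col jc (Bρ jc jc + 1)) := by
      funext r c
      rcases eq_or_ne c jc with rfl | hc
      · rcases eq_or_ne r jc with rfl | hr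
        · rw [Matrix.map_apply, Matrix.updateCol_apply, if_pos rfl, Function.update_self]
          exact hcornerσ
        · rw [Matrix.map_apply, Matrix.updateCol_apply, if_pos rfl, Function.update_of_ne hr]
          exact hoff r jc (fun hh => hr hh.1)
      · rw [Matrix.map_apply, Matrix.updateCol_apply, if_neg hc]
        exact hoff r c (fun hh => hc hh.2)
    have hsingle : Bρ.updateCol jc (Pi.single jc 1) =
        Matrix.fromBlocks ((hkM (liftA a (k+1)) U' V').submatrix e' f') 0
          (Matrix.of fun (_ : Unit) j => Bρ jc (Sum.inl j)) 1 := by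
      funext r c
      rcases r with i | ⟨⟩ <;> rcases c with j | ⟨⟩
      · rw [Matrix.updateCol_apply, if_neg (by simp [hjc])]
        exact key1 i j
      · rw [Matrix.updateCol_apply, if_pos rfl]
        have : (Sum.inl i : Fin (s-1) ⊕ Unit) ≠ jc := by simp [hjc]
        rw [Pi.single_eq_of_ne this]
        simp
      · rw [Matrix.updateCol_apply, if_neg (by simp [hjc])]
        simp [Matrix.fromBlocks_apply₂₁]
        rfl
      · rw [Matrix.updateCol_apply, if_pos rfl, hjc, Pi.single_eq_same]
        simp [Matrix.fromBlocks_apply₂₂, Matrix.one_apply]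
    have hdA : (Bρ.updateCol jc (Pi.single jc 1)).det
        = ((hkM (liftA a (k+1)) U' V').submatrix e' f').det := by
      rw [hsingle, Matrix.det_fromBlocks_zero₁₂, Matrix.det_one, mul_one]
    have hdet : Bρ.det ≠ 0 := by
      intro h0
      have h1 := expand (Bρ jc jc)
      rw [hself, h0] at h1
      have h2 := expand (Bρ jc jc + 1)
      rw [← hmapσ] at h2
      have h3 : (Bρ.map σR).det = σR Bρ.det := by
        rw [← RingHom.mapMatrix_apply, ← RingHom.map_det]
      rw [h3, h0, map_zero] at h2
      have h4 : (Bρ.updateCol jc (Pi.single jc 1)).det = 0 := by linear_combination h1 - h2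
      rw [hdA] at h4
      exact hdetA h4
    exact regM_of_det _ E F hdet


theorem isEmpty_sigma_of_sum_zero {P : ℕ} (W : Fin P → ℕ) (h : ∑ q, W q = 0) :
    IsEmpty ((q : Fin P) × Fin (W q)) := by
  constructor
  rintro ⟨q, iv, hiv⟩
  have hq : W q = 0 := by
    have := Finset.sum_eq_zero_iff.mp h q (Finset.mem_univ q)
    exact this
  omega

theorem goodA_step [Infinite K] (a : ℕ → Fin Mn → Fin Nn → K) (k : ℕ) (h : GoodA a k) :
    ∃ c : Fin Mn → Fin Nn → K, GoodA (Function.update a (k+1) c) (k+1) := by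
  classical
  set Idx := (Fin Nn → Fin (k+2)) × (Fin Mn → Fin (k+2)) with hIdx
  let Uf : Idx → Fin Nn → ℕ := fun p n => (p.1 n : ℕ)
  let Vf : Idx → Fin Mn → ℕ := fun p m => (p.2 m : ℕ)
  let dpoly : Idx → MvPolynomial (Fin Mn × Fin Nn) K := fun p =>
    if hp : (∑ n, Uf p n) = (∑ m, Vf p m) ∧ BoundedUV (Uf p) (Vf p) (k+1) then
      ((hkM (liftA a (k+1)) (Uf p) (Vf p)).submatrix
        (Fintype.equivFinOfCardEq (card_sigma_fin (Vf p))).symm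
        (Fintype.equivFinOfCardEq (by rw [card_sigma_fin]; exact hp.1 :
          Fintype.card ((n' : Fin Nn) × Fin (Uf p n')) = ∑ m, Vf p m)).symm).det
    else 1
  have hdp : ∀ p, dpoly p ≠ 0 := by
    intro p
    by_cases hp : (∑ n, Uf p n) = (∑ m, Vf p m) ∧ BoundedUV (Uf p) (Vf p) (k+1)
    · rw [show dpoly p = _ from dif_pos hp]
      exact inner_reg a k h (∑ m, Vf p m) (Uf p) (Vf p) hp.1 rfl hp.2 _ _ _
    · rw [show dpoly p = _ from dif_neg hp]
      exact one_ne_zero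
  have hprod : (∏ p : Idx, dpoly p) ≠ 0 := Finset.prod_ne_zero_iff.mpr fun p _ => hdp p
  have hex : ∃ x : Fin Mn × Fin Nn → K, MvPolynomial.eval x (∏ p : Idx, dpoly p) ≠ 0 := by
    by_contra hc
    push_neg at hc
    exact hprod (MvPolynomial.funext fun x => by rw [hc x, map_zero])
  obtain ⟨x, hx⟩ := hex
  set c : Fin Mn → Fin Nn → K := fun m n => x (m, n) with hc
  refine ⟨c, ?_⟩
  have evalLift : ∀ (i : ℕ) (mm : Fin Mn) (nn : Fin Nn),
      MvPolynomial.eval x (liftA a (k+1) i mm nn) = Function.update a (k+1) c i mm nn := by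
    intro i mm nn
    rw [liftA]
    split_ifs with hik
    · subst hik
      rw [Function.update_self]
      simp [hc]
    · rw [Function.update_of_ne hik]
      simp
  intro U V hUV hBd
  by_cases hz : (∑ n, U n) = 0
  · haveI := isEmpty_sigma_of_sum_zero V (by omega)
    exact regM_of_isEmpty _
  · have hUb : ∀ n, U n ≤ k + 1 := by
      intro n
      by_cases hUn0 : U n = 0
      · omega
      · have : ∃ m, 0 < V m := by
          by_contra hcm
          push_neg at hcm
          have : ∑ m, V m = 0 := Finset.sum_eq_zero fun m _ => by have := hcm m; omega
          omega
        obtain ⟨m, hm⟩ := this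
        have := hBd m n hm (by omega)
        omega
    have hVb : ∀ m, V m ≤ k + 1 := by
      intro m
      by_cases hVm0 : V m = 0
      · omega
      · have : ∃ n, 0 < U n := by
          by_contra hcn
          push_neg at hcn
          have : ∑ n, U n = 0 := Finset.sum_eq_zero fun n _ => by have := hcn n; omega
          omega
        obtain ⟨n, hn⟩ := this
        have := hBd m n (by omega) hn
        omega
    set p : Idx := (fun n => ⟨U n, by have := hUb n; omega⟩, fun m => ⟨V m, by have := hVb m; omega⟩)
      with hpdef
    have hUf : Uf p = U := funext fun n => rfl
    have hVf : Vf p = V := funext fun m => rfl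
    have hfac : MvPolynomial.eval x (dpoly p) ≠ 0 := by
      have : MvPolynomial.eval x (∏ q : Idx, dpoly q) = ∏ q : Idx, MvPolynomial.eval x (dpoly q) :=
        map_prod _ _ _
    -- each factor of a nonzero product is nonzero
      rw [this] at hx
      exact Finset.prod_ne_zero_iff.mp hx p (Finset.mem_univ p)
    have hcond : (∑ n, Uf p n) = (∑ m, Vf p m) ∧ BoundedUV (Uf p) (Vf p) (k+1) := by
      rw [hUf, hVf]; exact ⟨hUV, hBd⟩
    rw [show dpoly p = _ from dif_pos hcond] at hfac
    set eV := (Fintype.equivFinOfCardEq (card_sigma_fin (Vf p))).symm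
    set eU := (Fintype.equivFinOfCardEq (by rw [card_sigma_fin]; exact hcond.1 :
          Fintype.card ((n' : Fin Nn) × Fin (Uf p n')) = ∑ m, Vf p m)).symm
    have hmapdet :
        MvPolynomial.eval x ((hkM (liftA a (k+1)) (Uf p) (Vf p)).submatrix eV eU).det
        = ((hkM (Function.update a (k+1) c) (Uf p) (Vf p)).submatrix eV eU).det := by
      rw [RingHom.map_det, RingHom.mapMatrix_apply]
      congr 1
      funext i j
      exact evalLift _ _ _
    rw [hmapdet] at hfac
    exact regM_of_det _ eV eU hfac

theorem goodA_base (a : ℕ → Fin Mn → Fin Nn → K) : GoodA a 0 := by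
  intro U V hUV hBd
  have hz : ∑ n, U n = 0 := by
    by_contra hz
    have hU1 : ∃ n, 0 < U n := by
      by_contra hcn
      push_neg at hcn
      exact hz (Finset.sum_eq_zero fun n _ => by have := hcn n; omega)
    have hV1 : ∃ m, 0 < V m := by
      by_contra hcm
      push_neg at hcm
      have : ∑ m, V m = 0 := Finset.sum_eq_zero fun m _ => by have := hcm m; omega
      omega
    obtain ⟨n, hn⟩ := hU1
    obtain ⟨m, hm⟩ := hV1
    have := hBd m n hm hn
    omega
  haveI := isEmpty_sigma_of_sum_zero V (by omega)
  exact regM_of_isEmpty _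

def seqA [Infinite K] : (k : ℕ) → {a : ℕ → Fin Mn → Fin Nn → K // GoodA a k}
  | 0 => ⟨fun _ _ _ => 0, goodA_base _⟩
  | (k+1) =>
    ⟨Function.update (seqA k).1 (k+1)
        (Classical.choose (goodA_step (seqA k).1 k (seqA k).2)),
      Classical.choose_spec (goodA_step (seqA k).1 k (seqA k).2)⟩

theorem exists_goodA [Infinite K] :
    ∃ a : ℕ → Fin Mn → Fin Nn → K, ∀ U V, (∑ n, U n) = (∑ m, V m) → RegM (hkM a U V) := by
  set aa : ℕ → Fin Mn → Fin Nn → K := fun i => (seqA i).1 i with haa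
  have agree : ∀ k i, i ≤ k → (seqA (K := K) (Mn := Mn) (Nn := Nn) k).1 i = aa i := by
    intro k
    induction k with
    | zero =>
      intro i hi
      have : i = 0 := by omega
      subst this
      rfl
    | succ k ih =>
      intro i hi
      rcases eq_or_ne i (k+1) with rfl | hne
      · rfl
      · have h1 : (seqA (K := K) (Mn := Mn) (Nn := Nn) (k+1)).1 i
            = (seqA (K := K) (Mn := Mn) (Nn := Nn) k).1 i := by
          show Function.update (seqA k).1 (k+1) _ i = _
          rw [Function.update_of_ne hne]
        rw [h1]
        exact ih i (by omega)
  refine ⟨aa, ?_⟩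
  intro U V hUV
  set k := (∑ n, U n) + (∑ m, V m) with hk
  have hBd : BoundedUV U V k := by
    intro m n hm hn
    have h1 : V m ≤ ∑ m', V m' := Finset.single_le_sum (fun i _ => Nat.zero_le _) (Finset.mem_univ m)
    have h2 : U n ≤ ∑ n', U n' := Finset.single_le_sum (fun i _ => Nat.zero_le _) (Finset.mem_univ n)
    omega
  have hre := (seqA (K := K) (Mn := Mn) (Nn := Nn) k).2 U V hUV hBd
  have hmeq : hkM aa U V = hkM ((seqA (K := K) (Mn := Mn) (Nn := Nn) k).1) U V := by
    funext ⟨mi, ii⟩ ⟨nj, jj⟩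
    show aa ((ii:ℕ) + (jj:ℕ) + 1) mi nj = _
    have h0m : 0 < V mi := lt_of_le_of_lt (Nat.zero_le _) ii.2
    have h0n : 0 < U nj := lt_of_le_of_lt (Nat.zero_le _) jj.2
    have hble := hBd mi nj h0m h0n
    have hii := ii.2
    have hjj := jj.2
    rw [← agree k ((ii:ℕ)+(jj:ℕ)+1) (by omega)]
    rfl
  rw [hmeq]
  exact hre

end SBAaux


namespace SBAlaurent

theorem coeff_sum {α : Type*} (s : Finset α) (f : α → LaurentSeries K) (z : ℤ) :
    (∑ x ∈ s, f x).coeff z = ∑ x ∈ s, (f x).coeff z :=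
  map_sum (HahnSeries.coeff.addMonoidHom z) f s

theorem algebraMap_L (c : K) : algebraMap K (LaurentSeries K) c = HahnSeries.single 0 c := by
  rw [HahnSeries.algebraMap_apply', ← PowerSeries.C_eq_algebraMap, HahnSeries.ofPowerSeries_C,
    HahnSeries.C_apply]

theorem xL_pow (j : ℕ) : (xL K) ^ j = HahnSeries.single (-(j : ℤ)) (1 : K) := by
  rw [xL, HahnSeries.single_pow]
  norm_num

theorem toL_eq_sum (P : Polynomial K) (D : ℕ) (hD : P.natDegree < D) :
    toL P = ∑ j ∈ Finset.range D, HahnSeries.single (-(j : ℤ)) (P.coeff j) := by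
  rw [toL, Polynomial.aeval_def, Polynomial.eval₂_eq_sum_range' _ hD]
  refine Finset.sum_congr rfl fun j _ => ?_
  rw [xL_pow, algebraMap_L, HahnSeries.single_mul_single]
  simp

theorem toL_coeff_neg (P : Polynomial K) (j : ℕ) : (toL P).coeff (-(j : ℤ)) = P.coeff j := by
  set D := max (P.natDegree + 1) (j + 1) with hD
  rw [toL_eq_sum P D (by omega), coeff_sum]
  rw [Finset.sum_eq_single j]
  · rw [HahnSeries.coeff_single_same]
  · intro b _ hb
    rw [HahnSeries.coeff_single_of_ne]
    intro hc
    exact hb (by omega)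
  · intro hj
    exact absurd (Finset.mem_range.mpr (by omega)) hj

theorem toL_coeff_nonpos (P : Polynomial K) (z : ℤ) (hz : z ≤ 0) :
    (toL P).coeff z = P.coeff (-z).toNat := by
  have hzj : z = -(((-z).toNat : ℕ) : ℤ) := by omega
  conv_lhs => rw [hzj]
  rw [toL_coeff_neg]

theorem toL_coeff_pos (P : Polynomial K) (z : ℤ) (hz : 0 < z) : (toL P).coeff z = 0 := by
  rw [toL_eq_sum P (P.natDegree + 1) (lt_add_one _), coeff_sum]
  refine Finset.sum_eq_zero fun j _ => ?_
  rw [HahnSeries.coeff_single_of_ne]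
  omega

theorem toL_zero : toL (0 : Polynomial K) = 0 := map_zero (Polynomial.aeval (xL K))

theorem toL_sub (P Q : Polynomial K) : toL (P - Q) = toL P - toL Q :=
  map_sub (Polynomial.aeval (xL K)) P Q

theorem toL_ne_zero {P : Polynomial K} (hP : P ≠ 0) : toL P ≠ 0 := by
  intro h
  have h2 := toL_coeff_neg P P.natDegree
  rw [h, HahnSeries.coeff_zero] at h2
  exact Polynomial.leadingCoeff_ne_zero.mpr hP h2.symm

theorem order_toL {P : Polynomial K} (hP : P ≠ 0) : (toL P).order = -(P.natDegree : ℤ) := by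
  have h1 : (toL P).coeff (-(P.natDegree : ℤ)) ≠ 0 := by
    rw [toL_coeff_neg]
    exact Polynomial.leadingCoeff_ne_zero.mpr hP
  have hle : (toL P).order ≤ -(P.natDegree : ℤ) := HahnSeries.order_le_of_coeff_ne_zero h1
  have h2 : (toL P).coeff ((toL P).order) ≠ 0 := HahnSeries.coeff_order_eq_zero.not.mpr (toL_ne_zero hP)
  rcases lt_or_eq_of_le hle with hlt | heq
  · exfalso
    rw [toL_coeff_nonpos _ _ (by omega)] at h2
    exact h2 (Polynomial.coeff_eq_zero_of_natDegree_lt (by omega))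
  · exact heq

theorem absL_toL {P : Polynomial K} (hP : P ≠ 0) :
    absL (toL P) = Real.exp (P.natDegree : ℝ) := by
  rw [absL, if_neg (toL_ne_zero hP), order_toL hP]
  norm_num

theorem mul_toL_coeff (α : LaurentSeries K) (P : Polynomial K) (D : ℕ) (hD : P.natDegree < D)
    (z : ℤ) :
    (α * toL P).coeff z = ∑ j ∈ Finset.range D, α.coeff (z + j) * P.coeff j := by
  rw [toL_eq_sum P D hD, Finset.mul_sum, coeff_sum]
  refine Finset.sum_congr rfl fun j _ => ?_
  have hz : z = (z + j) + (-(j : ℤ)) := by ring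
  conv_lhs => rw [hz]
  rw [HahnSeries.coeff_mul_single_add]

theorem normL_eq_exp (G : LaurentSeries K) (v : ℕ)
    (h1 : G.coeff ((v : ℤ) + 1) ≠ 0) (h2 : ∀ z : ℤ, 1 ≤ z → z < (v : ℤ) + 1 → G.coeff z = 0) :
    normL G = Real.exp (-((v : ℝ) + 1)) := by
  have hG0 : G ≠ 0 := fun h => h1 (by rw [h, HahnSeries.coeff_zero])
  set o := G.order with ho
  set D : ℕ := (-o).toNat + 1 with hDdef
  have hDz : ∀ z : ℤ, z ≤ -(D : ℤ) → G.coeff z = 0 := by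
    intro z hz
    apply HahnSeries.coeff_eq_zero_of_lt_order
    have h3 : -o ≤ ((-o).toNat : ℤ) := Int.self_le_toNat _
    rw [← ho]
    omega
  set Q : Polynomial K := ∑ j ∈ Finset.range D, Polynomial.C (G.coeff (-(j : ℤ))) * Polynomial.X ^ j
    with hQ
  have hQcoeff : ∀ j : ℕ, Q.coeff j = if j < D then G.coeff (-(j : ℤ)) else 0 := by
    intro j
    rw [hQ, Polynomial.finset_sum_coeff]
    simp_rw [Polynomial.coeff_C_mul, Polynomial.coeff_X_pow]
    simp only [mul_ite, mul_one, mul_zero]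
    rw [Finset.sum_ite_eq]
    simp [Finset.mem_range]
  set F := G - toL Q with hF
  have hFpos : ∀ z : ℤ, 0 < z → F.coeff z = G.coeff z := by
    intro z hz
    rw [hF, HahnSeries.coeff_sub, toL_coeff_pos _ _ hz, sub_zero]
  have hFnonpos : ∀ z : ℤ, z ≤ 0 → F.coeff z = 0 := by
    intro z hz
    rw [hF, HahnSeries.coeff_sub, toL_coeff_nonpos Q z hz, hQcoeff]
    by_cases hj : (-z).toNat < D
    · rw [if_pos hj]
      have h4 : -(((-z).toNat : ℕ) : ℤ) = z := by omega
      rw [h4, sub_self]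
    · rw [if_neg hj, hDz z (by omega), sub_zero]
  have hFv : F.coeff ((v : ℤ) + 1) = G.coeff ((v : ℤ) + 1) := hFpos _ (by omega)
  have hF0 : F ≠ 0 := fun h => h1 (by rw [← hFv, h, HahnSeries.coeff_zero])
  have hord : F.order = (v : ℤ) + 1 := by
    have hle : F.order ≤ (v : ℤ) + 1 :=
      HahnSeries.order_le_of_coeff_ne_zero (by rw [hFv]; exact h1)
    have hco := HahnSeries.coeff_order_eq_zero.not.mpr hF0
    rcases lt_or_eq_of_le hle with hlt | heq
    · exfalso
      by_cases hpos : 1 ≤ F.order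
      · exact hco (by rw [hFpos _ (by omega)]; exact h2 _ hpos hlt)
      · exact hco (hFnonpos _ (by omega))
    · exact heq
  have habs : absL F = Real.exp (-((v : ℝ) + 1)) := by
    rw [absL, if_neg hF0, hord]
    norm_num
  have hmem : Real.exp (-((v : ℝ) + 1)) ∈ {r : ℝ | ∃ P : Polynomial K, r = absL (G - toL P)} :=
    ⟨Q, by rw [← hF, habs]⟩
  have hlb : ∀ r ∈ {r : ℝ | ∃ P : Polynomial K, r = absL (G - toL P)},
      Real.exp (-((v : ℝ) + 1)) ≤ r := by
    rintro r ⟨P, rfl⟩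
    by_cases hPQ : P = Q
    · subst hPQ
      rw [← hF, habs]
    · have hR : Q - P ≠ 0 := sub_ne_zero.mpr (Ne.symm hPQ)
      set T := G - toL P with hT
      set z₀ : ℤ := -(((Q - P).natDegree : ℕ) : ℤ) with hz₀
      have hTz : T.coeff z₀ ≠ 0 := by
        have hsplit : T = F + toL (Q - P) := by
          rw [hT, hF, toL_sub]
          ring
        rw [hsplit, HahnSeries.coeff_add, hFnonpos z₀ (by omega), zero_add, hz₀, toL_coeff_neg]
        exact Polynomial.leadingCoeff_ne_zero.mpr hR
      have hT0 : T ≠ 0 := fun h => hTz (by rw [h, HahnSeries.coeff_zero])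
      have hTord : T.order ≤ 0 := le_trans (HahnSeries.order_le_of_coeff_ne_zero hTz) (by omega)
      rw [absL, if_neg hT0]
      apply Real.exp_le_exp.mpr
      have hc : ((T.order : ℤ) : ℝ) ≤ 0 := by exact_mod_cast hTord
      have hv0 : (0 : ℝ) ≤ (v : ℝ) := Nat.cast_nonneg v
      linarith
  rw [normL]
  exact IsLeast.csInf_eq ⟨hmem, hlb⟩

/-- The Laurent series with prescribed coefficients at negative powers of `x`. -/
def seriesOf (g : ℕ → K) : LaurentSeries K :=
  ((PowerSeries.mk fun i => if i = 0 then 0 else g i : PowerSeries K) : LaurentSeries K)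

theorem seriesOf_coeff_pos (g : ℕ → K) (z : ℤ) (hz : 0 < z) :
    (seriesOf g).coeff z = g z.toNat := by
  rw [seriesOf, PowerSeries.coeff_coe]
  rw [if_neg (by omega), PowerSeries.coeff_mk]
  rw [if_neg (by omega)]
  congr 1
  omega

end SBAlaurent

section MainProof

open SBAaux SBAlaurent

theorem exists_sba_matrix' {K : Type*} [Field K] [Infinite K]
    (M N : ℕ) (hM : 0 < M) (hN : 0 < N) :
    ∃ A : Matrix (Fin M) (Fin N) (LaurentSeries K),
      StronglyBadlyApproximable A := by
  classical
  obtain ⟨a, hA⟩ := SBAaux.exists_goodA (K := K) (Mn := M) (Nn := N)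
  set A : Matrix (Fin M) (Fin N) (LaurentSeries K) :=
    Matrix.of fun m n => SBAlaurent.seriesOf (fun i => a i m n) with hAdef
  refine ⟨A, (M : ℝ) + N, ?_, ?_⟩
  · have h1 : (1:ℝ) ≤ (M:ℝ) := by exact_mod_cast hM
    have h2 : (0:ℝ) ≤ (N:ℝ) := Nat.cast_nonneg N
    linarith
  intro ξ hξ
  set u : Fin N → ℕ := fun n => if ξ n = 0 then 0 else (ξ n).natDegree + 1 with hu
  have hAcoeff : ∀ (m : Fin M) (n : Fin N) (z : ℤ), 0 < z → (A m n).coeff z = a z.toNat m n :=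
    fun m n z hz => SBAlaurent.seriesOf_coeff_pos _ z hz
  have hGcoeff : ∀ (m : Fin M) (z : ℤ),
      (∑ n, A m n * toL (ξ n)).coeff z
        = ∑ n, ∑ j ∈ Finset.range (u n), (A m n).coeff (z + j) * (ξ n).coeff j := by
    intro m z
    rw [SBAlaurent.coeff_sum]
    refine Finset.sum_congr rfl fun n _ => ?_
    by_cases hn : ξ n = 0
    · rw [hn, SBAlaurent.toL_zero, mul_zero, HahnSeries.coeff_zero]
      rw [show u n = 0 from by simp [hu, hn]]
      simp
    · rw [show u n = (ξ n).natDegree + 1 from by simp [hu, hn]]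
      exact SBAlaurent.mul_toL_coeff _ _ _ (lt_add_one _) z
  have claimA : ∀ Vv : Fin M → ℕ, (∑ n, u n) = (∑ m, Vv m) →
      ∃ (m : Fin M) (i : ℕ), i < Vv m ∧ (∑ n, A m n * toL (ξ n)).coeff ((i:ℤ)+1) ≠ 0 := by
    intro Vv hsum
    by_contra hcon
    push_neg at hcon
    set cvec : ((n : Fin N) × Fin (u n)) → K := fun x => (ξ x.1).coeff (x.2 : ℕ) with hcvec
    have hc0 : cvec ≠ 0 := by
      obtain ⟨n, hn⟩ : ∃ n, ξ n ≠ 0 := by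
        by_contra hall
        push_neg at hall
        exact hξ (funext hall)
      have hun : (ξ n).natDegree < u n := by simp [hu, hn]
      intro h0
      have h1 := congrFun h0 ⟨n, ⟨(ξ n).natDegree, hun⟩⟩
      exact Polynomial.leadingCoeff_ne_zero.mpr hn h1
    have hreg := hA u Vv hsum
    have hmv : Matrix.mulVec (SBAaux.hkM a u Vv) cvec = 0 := by
      funext r
      obtain ⟨mi, ii⟩ := r
      show ∑ x : (n : Fin N) × Fin (u n), SBAaux.hkM a u Vv ⟨mi, ii⟩ x * cvec x = 0
      have h1 := hcon mi ii ii.2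
      rw [hGcoeff mi ((ii:ℤ)+1)] at h1
      rw [← h1]
      rw [← Finset.univ_sigma_univ, Finset.sum_sigma]
      refine Finset.sum_congr rfl fun n _ => ?_
      calc (∑ s : Fin (u n), SBAaux.hkM a u Vv ⟨mi, ii⟩ ⟨n, s⟩ * cvec ⟨n, s⟩)
          = ∑ j ∈ Finset.range (u n), a ((ii:ℕ) + j + 1) mi n * (ξ n).coeff j :=
            Fin.sum_univ_eq_sum_range (fun j => a ((ii:ℕ) + j + 1) mi n * (ξ n).coeff j) (u n)
        _ = ∑ j ∈ Finset.range (u n), (A mi n).coeff (((ii:ℤ)+1) + j) * (ξ n).coeff j := by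
            refine Finset.sum_congr rfl fun j hj => ?_
            rw [hAcoeff mi n (((ii:ℤ)+1) + j) (by omega)]
            congr 2
            omega
    set d := ∑ m', Vv m' with hd
    have cardV : Fintype.card ((m' : Fin M) × Fin (Vv m')) = d := SBAaux.card_sigma_fin Vv
    have cardU : Fintype.card ((n' : Fin N) × Fin (u n')) = d := by
      rw [SBAaux.card_sigma_fin]
      omega
    set eV : Fin d ≃ ((m' : Fin M) × Fin (Vv m')) := (Fintype.equivFinOfCardEq cardV).symm
    set eU : Fin d ≃ ((n' : Fin N) × Fin (u n')) := (Fintype.equivFinOfCardEq cardU).symm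
    have hdet := hreg d eV eU
    have hsub : Matrix.mulVec ((SBAaux.hkM a u Vv).submatrix eV eU) (cvec ∘ eU) = 0 := by
      rw [Matrix.submatrix_mulVec_equiv]
      have hcomp : (cvec ∘ eU) ∘ eU.symm = cvec := by
        funext x
        simp
      rw [hcomp, hmv]
      funext i
      rfl
    have hker := Matrix.eq_zero_of_mulVec_eq_zero hdet hsub
    apply hc0
    funext x
    have h3 := congrFun hker (eU.symm x)
    simpa using h3
  set Gg : Fin M → LaurentSeries K := fun m => ∑ n, A m n * toL (ξ n) with hGg
  have hex : ∀ m, ∃ i : ℕ, (Gg m).coeff ((i:ℤ)+1) ≠ 0 := by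
    intro m
    obtain ⟨m', i, hi, hne⟩ := claimA (Pi.single m (∑ n, u n))
      (by rw [Finset.sum_pi_single']; simp)
    have hmm : m' = m := by
      by_contra hne'
      rw [Pi.single_eq_of_ne hne'] at hi
      omega
    subst hmm
    exact ⟨i, hne⟩
  set v : Fin M → ℕ := fun m => Nat.find (hex m) with hv
  have hvspec : ∀ m, (Gg m).coeff ((v m : ℤ)+1) ≠ 0 := fun m => Nat.find_spec (hex m)
  have hvmin : ∀ m (i : ℕ), i < v m → (Gg m).coeff ((i:ℤ)+1) = 0 := by
    intro m i hi
    have := Nat.find_min (hex m) hi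
    simpa using this
  have hsum_v : (∑ m, v m) < ∑ n, u n := by
    by_contra hge
    push_neg at hge
    obtain ⟨Vv, hVle, hVsum⟩ := SBAaux.exists_le_sum v (∑ n, u n) hge
    obtain ⟨m, i, hi, hne⟩ := claimA Vv hVsum.symm
    exact hne (hvmin m i (lt_of_lt_of_le hi (hVle m)))
  have hnorm : ∀ m, normL (Gg m) = Real.exp (-((v m : ℝ)+1)) := by
    intro m
    apply SBAlaurent.normL_eq_exp _ _ (hvspec m)
    intro z hz1 hz2
    have hzz : z = (((z.toNat - 1 : ℕ)) : ℤ) + 1 := by omega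
    rw [hzz]
    exact hvmin m (z.toNat - 1) (by omega)
  have hprod1 : (∏ m, normL (Gg m)) = Real.exp (∑ m, (-((v m : ℝ)+1))) := by
    rw [Real.exp_sum]
    exact Finset.prod_congr rfl fun m _ => hnorm m
  have hprod2 : Real.exp (∑ n, ((u n : ℝ) - 1)) ≤ ∏ n, max (absL (toL (ξ n))) 1 := by
    rw [Real.exp_sum]
    refine Finset.prod_le_prod (fun n _ => (Real.exp_pos _).le) fun n _ => ?_
    by_cases hn : ξ n = 0
    · have hun : (u n : ℝ) = 0 := by simp [hu, hn]
      rw [hun]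
      calc Real.exp ((0:ℝ) - 1) ≤ 1 := by
            rw [Real.exp_le_one_iff]
            norm_num
        _ ≤ max (absL (toL (ξ n))) 1 := le_max_right _ _
    · have hun : (u n : ℝ) = ((ξ n).natDegree : ℝ) + 1 := by
        simp [hu, hn]
      rw [hun]
      have habs : absL (toL (ξ n)) = Real.exp (((ξ n).natDegree : ℝ)) := SBAlaurent.absL_toL hn
      calc Real.exp ((((ξ n).natDegree : ℝ) + 1) - 1) = absL (toL (ξ n)) := by
            rw [habs]
            ring_nf
        _ ≤ max (absL (toL (ξ n))) 1 := le_max_left _ _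
  have e1 : ∑ n, ((u n : ℝ) - 1) = (∑ n, (u n : ℝ)) - N := by
    rw [Finset.sum_sub_distrib, Finset.sum_const, Finset.card_univ, Fintype.card_fin]
    simp
  have e2 : ∑ m, (-((v m : ℝ)+1)) = -(∑ m, (v m : ℝ)) - M := by
    have h4 : ∑ m, (((v m : ℝ))+1) = (∑ m, (v m:ℝ)) + M := by
      rw [Finset.sum_add_distrib, Finset.sum_const, Finset.card_univ, Fintype.card_fin]
      simp
    calc ∑ m, (-((v m:ℝ)+1)) = -∑ m, ((v m:ℝ)+1) := by rw [← Finset.sum_neg_distrib]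
      _ = -(∑ m, (v m : ℝ)) - M := by rw [h4]; ring
  have hcast : (∑ m, (v m : ℝ)) + 1 ≤ ∑ n, (u n : ℝ) := by
    have h5 : ((∑ m, v m : ℕ) : ℝ) + 1 ≤ ((∑ n, u n : ℕ) : ℝ) := by
      exact_mod_cast hsum_v
    push_cast at h5
    exact h5
  calc Real.exp (-((M:ℝ)+N)) < Real.exp ((∑ n, ((u n : ℝ) - 1)) + ∑ m, (-((v m : ℝ)+1))) := by
        apply Real.exp_lt_exp.mpr
        rw [e1, e2]
        linarith
    _ = Real.exp (∑ n, ((u n : ℝ) - 1)) * Real.exp (∑ m, (-((v m : ℝ)+1))) := Real.exp_add _ _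
    _ ≤ (∏ n, max (absL (toL (ξ n))) 1) * (∏ m, normL (Gg m)) := by
        rw [hprod1]
        exact mul_le_mul_of_nonneg_right hprod2 (Real.exp_pos _).le
    _ = (∏ m, normL (Gg m)) * (∏ n, max (absL (toL (ξ n))) 1) := mul_comm _ _

end MainProof

/-- if `K` is infinite, then for any positive integers `M`, `N` there exists
a strongly badly approximable `M × N` matrix with entries in `T`. -/
theorem exists_sba_matrix {K : Type*} [Field K] [Infinite K]
    (M N : ℕ) (hM : 0 < M) (hN : 0 < N) :
    ∃ A : Matrix (Fin M) (Fin N) (LaurentSeries K),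
      StronglyBadlyApproximable A :=
  exists_sba_matrix' M N hM hN
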